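/- Under Hypothesis (H), set f = P/Q and for each natural number i let D_x^i(f) = D_y(g_i) + r_i be the unique decomposition with g_i, r_i in k(x,y) proper as rational functions in y over k(x) and with the denominator of r_i (in k(x)[y]) squarefree. Then: (1) for η_0, …, η_ρ in k(x) with η_ρ ≠ 0, the operator L = Σ_{i=0}^{ρ} η_i·D_x^i is a telescoper of order ρ for f with certificate Σ_{i=0}^{ρ} η_i·g_i if and only if Σ_{i=0}^{ρ} η_i·r_i = 0; (2) consequently, ρ is the smallest integer such that r_0, …, r_ρ are linearly dependent over k(x) if and only if the corresponding operator Σ_{i=0}^{ρ} η_i·D_x^i (for any nontrivial dependence Σ η_i r_i = 0) is a minimal telescoper for f, with certificate Σ_{i=0}^{ρ} η_i·g_i. -/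

import Mathlib

open Polynomial

noncomputable section

/-- A map is a derivation: it is additive and satisfies the Leibniz rule. -/
def IsDeriv {F : Type*} [CommRing F] (D : F → F) : Prop :=
  (∀ a b, D (a + b) = D a + D b) ∧ ∀ a b, D (a * b) = a * D b + b * D a

/-- Degree in `x` of an element of `k[x][y]` (inner variable `x`, outer variable `y`). -/
def degX {k : Type*} [Field k] (Q : Polynomial (Polynomial k)) : ℕ :=
  Q.support.sup fun i => (Q.coeff i).natDegree

/-- Partial derivative with respect to `x` on `k[x][y]`. -/
def derivX {k : Type*} [Field k] (Q : Polynomial (Polynomial k)) : Polynomial (Polynomial k) :=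
  Q.sum fun i a => Polynomial.C (Polynomial.derivative a) * Polynomial.X ^ i

/-- The embedding `k[x][y] → k(x)(y)`. -/
def toF {k : Type*} [Field k] : Polynomial (Polynomial k) →+* RatFunc (RatFunc k) :=
  (algebraMap (Polynomial (RatFunc k)) (RatFunc (RatFunc k))).comp
    (Polynomial.mapRingHom (algebraMap (Polynomial k) (RatFunc k)))

/-- The embedding `k(x) → k(x)(y)`. -/
def ratToF {k : Type*} [Field k] : RatFunc k →+* RatFunc (RatFunc k) :=
  (algebraMap (Polynomial (RatFunc k)) (RatFunc (RatFunc k))).comp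
    (Polynomial.C : RatFunc k →+* Polynomial (RatFunc k))

/-- The embedding `k(x)[y] → k(x)(y)`. -/
def kyToF {k : Type*} [Field k] : Polynomial (RatFunc k) →+* RatFunc (RatFunc k) :=
  algebraMap (Polynomial (RatFunc k)) (RatFunc (RatFunc k))

/-- The embedding `k[x][y] → k(x)[y]`. -/
def toKy {k : Type*} [Field k] : Polynomial (Polynomial k) →+* Polynomial (RatFunc k) :=
  Polynomial.mapRingHom (algebraMap (Polynomial k) (RatFunc k))

/-- The embedding `k[y] → k[x][y]` (a polynomial in `y` viewed in `k[x][y]`). -/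
def yToXY {k : Type*} [Field k] : Polynomial k →+* Polynomial (Polynomial k) :=
  Polynomial.mapRingHom (Polynomial.C : k →+* Polynomial k)

/-- The Hermite matrix associated with a factorisation `Q = Qs * Qneg`, with respect to the
monomial bases: its columns are the coefficient vectors (in `y`, coefficients in `k[x]`) of
`Qs * D_y(y^j) - E * y^j` for `j < dm` (where `E = Qs * D_y(Qneg) / Qneg`) and of
`Qneg * y^j` for `j < dy - dm`. -/
def hermiteMat {k : Type*} [Field k] (Qs Qneg E : Polynomial (Polynomial k)) (dy dm : ℕ) :
    Matrix (Fin dy) (Fin dy) (Polynomial k) :=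
  Matrix.of fun i j =>
    if (j : ℕ) < dm then
      (Qs * Polynomial.derivative (Polynomial.X ^ (j : ℕ)) - E * Polynomial.X ^ (j : ℕ)).coeff i
    else
      (Qneg * Polynomial.X ^ ((j : ℕ) - dm)).coeff i

namespace Stmt8Aux

section Deriv

variable {F : Type*} [CommRing F] {D : F → F}

theorem deriv_zero (hD : IsDeriv D) : D 0 = 0 := by
  have h := hD.1 0 0
  rw [add_zero] at h
  exact left_eq_add.mp h

theorem deriv_neg (hD : IsDeriv D) (a : F) : D (-a) = -D a := by
  have h := hD.1 a (-a)
  rw [add_neg_cancel, deriv_zero hD] at h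
  exact (eq_neg_of_add_eq_zero_right h.symm)

theorem deriv_sub (hD : IsDeriv D) (a b : F) : D (a - b) = D a - D b := by
  rw [sub_eq_add_neg, hD.1, deriv_neg hD, sub_eq_add_neg]

theorem deriv_sum (hD : IsDeriv D) {ι : Type*} (s : Finset ι) (f : ι → F) :
    D (∑ i ∈ s, f i) = ∑ i ∈ s, D (f i) := by
  classical
  induction s using Finset.induction_on with
  | empty => simpa using deriv_zero hD
  | insert _ _ hx ih =>
      rw [Finset.sum_insert hx, Finset.sum_insert hx, hD.1, ih]

theorem deriv_const_mul (hD : IsDeriv D) {c : F} (hc : D c = 0) (a : F) :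
    D (c * a) = c * D a := by
  rw [hD.2, hc, mul_zero, add_zero]

end Deriv

section Key

variable {K : Type*} [Field K]

/-- `s` can be written as `A/B` with `B` squarefree and `deg A < deg B`. -/
def GoodRep (s : RatFunc K) : Prop :=
  ∃ A B : K[X], Squarefree B ∧ A.degree < B.degree ∧
    s = algebraMap K[X] (RatFunc K) A / algebraMap K[X] (RatFunc K) B

theorem goodRep_zero : GoodRep (0 : RatFunc K) :=
  ⟨0, 1, squarefree_one, by simp, by simp⟩

theorem GoodRep.const_mul {s : RatFunc K} (h : GoodRep s) (c : K) :
    GoodRep (algebraMap K[X] (RatFunc K) (C c) * s) := by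
  obtain ⟨A, B, hB, hdeg, hs⟩ := h
  refine ⟨C c * A, B, hB, lt_of_le_of_lt ?_ hdeg, by rw [hs, map_mul, mul_div_assoc]⟩
  calc (C c * A).degree ≤ (C c).degree + A.degree := degree_mul_le _ _
    _ ≤ 0 + A.degree := add_le_add degree_C_le le_rfl
    _ = A.degree := zero_add _

theorem squarefree_lcm {α : Type*} [CommMonoidWithZero α] [Nontrivial α] [GCDMonoid α]
    [UniqueFactorizationMonoid α] {B₁ B₂ : α} (h₁ : Squarefree B₁) (h₂ : Squarefree B₂) :
    Squarefree (lcm B₁ B₂) := by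
  intro x hx
  by_contra hxu
  have hx0 : x ≠ 0 := by
    rintro rfl
    rw [zero_mul, zero_dvd_iff] at hx
    rcases lcm_eq_zero_iff B₁ B₂ |>.mp hx with h | h
    · exact h₁.ne_zero h
    · exact h₂.ne_zero h
  obtain ⟨p, hpirr, hpx⟩ := WfDvdMonoid.exists_irreducible_factor hxu hx0
  have hp : Prime p := UniqueFactorizationMonoid.irreducible_iff_prime.mp hpirr
  have key : ∀ b : α, Squarefree b → ∃ c, b ∣ p * c ∧ ¬ p ∣ c := by
    intro b hb
    by_cases hpb : p ∣ b
    · obtain ⟨c, rfl⟩ := hpb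
      refine ⟨c, dvd_refl _, fun hpc => ?_⟩
      obtain ⟨e, rfl⟩ := hpc
      exact hp.not_unit (hb p ⟨e, (mul_assoc p p e).symm⟩)
    · exact ⟨b, Dvd.dvd.mul_left (dvd_refl b) p, hpb⟩
  obtain ⟨c₁, hc₁, hpc₁⟩ := key B₁ h₁
  obtain ⟨c₂, hc₂, hpc₂⟩ := key B₂ h₂
  have hlcm : lcm B₁ B₂ ∣ p * (c₁ * c₂) :=
    lcm_dvd (hc₁.trans (by exact mul_dvd_mul_left p (dvd_mul_right c₁ c₂)))
      (hc₂.trans (by exact mul_dvd_mul_left p (dvd_mul_left c₂ c₁)))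
  have hpp : p * p ∣ p * (c₁ * c₂) :=
    (mul_dvd_mul hpx hpx).trans (hx.trans hlcm)
  have := (mul_dvd_mul_iff_left hp.ne_zero).mp hpp
  rcases hp.dvd_or_dvd this with h | h
  · exact hpc₁ h
  · exact hpc₂ h

theorem GoodRep.add {s₁ s₂ : RatFunc K} (h₁ : GoodRep s₁) (h₂ : GoodRep s₂) :
    GoodRep (s₁ + s₂) := by
  classical
  letI : GCDMonoid K[X] := EuclideanDomain.gcdMonoid _
  obtain ⟨A₁, B₁, hB₁, hd₁, hs₁⟩ := h₁
  obtain ⟨A₂, B₂, hB₂, hd₂, hs₂⟩ := h₂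
  set B := lcm B₁ B₂ with hBdef
  have hB : Squarefree B := squarefree_lcm hB₁ hB₂
  have hB0 : B ≠ 0 := hB.ne_zero
  obtain ⟨Q₁, hQ₁⟩ : B₁ ∣ B := dvd_lcm_left _ _
  obtain ⟨Q₂, hQ₂⟩ : B₂ ∣ B := dvd_lcm_right _ _
  have hQ₁0 : Q₁ ≠ 0 := fun h => hB0 (by rw [hQ₁, h, mul_zero])
  have hQ₂0 : Q₂ ≠ 0 := fun h => hB0 (by rw [hQ₂, h, mul_zero])
  refine ⟨A₁ * Q₁ + A₂ * Q₂, B, hB, ?_, ?_⟩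
  · refine lt_of_le_of_lt (degree_add_le _ _) (max_lt ?_ ?_)
    · rw [degree_mul, hQ₁, degree_mul]
      exact WithBot.add_lt_add_right (fun h => hQ₁0 (degree_eq_bot.mp h)) hd₁
    · rw [degree_mul, hQ₂, degree_mul]
      exact WithBot.add_lt_add_right (fun h => hQ₂0 (degree_eq_bot.mp h)) hd₂
  · have e₁ : algebraMap K[X] (RatFunc K) B₁ ≠ 0 := RatFunc.algebraMap_ne_zero hB₁.ne_zero
    have e₂ : algebraMap K[X] (RatFunc K) B₂ ≠ 0 := RatFunc.algebraMap_ne_zero hB₂.ne_zero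
    have eQ₁ : algebraMap K[X] (RatFunc K) Q₁ ≠ 0 := RatFunc.algebraMap_ne_zero hQ₁0
    have eQ₂ : algebraMap K[X] (RatFunc K) Q₂ ≠ 0 := RatFunc.algebraMap_ne_zero hQ₂0
    have q1 : algebraMap K[X] (RatFunc K) B
        = algebraMap K[X] (RatFunc K) B₁ * algebraMap K[X] (RatFunc K) Q₁ := by
      rw [hQ₁, map_mul]
    have q2 : algebraMap K[X] (RatFunc K) B
        = algebraMap K[X] (RatFunc K) B₂ * algebraMap K[X] (RatFunc K) Q₂ := by
      rw [hQ₂, map_mul]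
    rw [hs₁, hs₂, div_add_div _ _ e₁ e₂,
      div_eq_div_iff (mul_ne_zero e₁ e₂) (RatFunc.algebraMap_ne_zero hB0), map_add, map_mul,
      map_mul]
    linear_combination (algebraMap K[X] (RatFunc K) A₁ * algebraMap K[X] (RatFunc K) B₂) * q1 +
      (algebraMap K[X] (RatFunc K) B₁ * algebraMap K[X] (RatFunc K) A₂) * q2

theorem GoodRep.sum {ι : Type*} (s : Finset ι) (f : ι → RatFunc K)
    (h : ∀ i ∈ s, GoodRep (f i)) : GoodRep (∑ i ∈ s, f i) := by
  classical
  induction s using Finset.induction_on with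
  | empty => simpa using goodRep_zero
  | insert _ _ hx ih =>
      rw [Finset.sum_insert hx]
      exact (h _ (Finset.mem_insert_self _ _)).add
        (ih fun i hi => h i (Finset.mem_insert_of_mem hi))

theorem num_mul_eq {s : RatFunc K} {A B : K[X]} (hB : B ≠ 0)
    (h : s = algebraMap K[X] (RatFunc K) A / algebraMap K[X] (RatFunc K) B) :
    s.num * B = s.denom * A := by
  apply RatFunc.algebraMap_injective K
  have hB' : algebraMap K[X] (RatFunc K) B ≠ 0 := RatFunc.algebraMap_ne_zero hB
  have hd' : algebraMap K[X] (RatFunc K) s.denom ≠ 0 :=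
    RatFunc.algebraMap_ne_zero s.denom_ne_zero
  have hnum : algebraMap K[X] (RatFunc K) s.num = s * algebraMap K[X] (RatFunc K) s.denom :=
    ((div_eq_iff hd').mp (RatFunc.num_div_denom s))
  have hA : s * algebraMap K[X] (RatFunc K) B = algebraMap K[X] (RatFunc K) A := by
    rw [h, div_mul_cancel₀ _ hB']
  rw [map_mul, map_mul]
  linear_combination (algebraMap K[X] (RatFunc K) s.denom) * hA +
    (algebraMap K[X] (RatFunc K) B) * hnum

theorem GoodRep.denom_squarefree_proper {s : RatFunc K} (h : GoodRep s) :
    Squarefree s.denom ∧ s.num.degree < s.denom.degree := by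
  obtain ⟨A, B, hB, hdeg, hs⟩ := h
  have hB0 : B ≠ 0 := hB.ne_zero
  have key := num_mul_eq hB0 hs
  have hdvd : s.denom ∣ s.num * B := ⟨A, key⟩
  have hdvdB : s.denom ∣ B := (RatFunc.isCoprime_num_denom s).symm.dvd_of_dvd_mul_left hdvd
  refine ⟨hB.squarefree_of_dvd hdvdB, ?_⟩
  by_cases hs0 : s = 0
  · rw [hs0, RatFunc.num_zero, RatFunc.denom_zero, degree_zero, degree_one]
    exact bot_lt_iff_ne_bot.mpr (by simp)
  · have hn0 : s.num ≠ 0 := RatFunc.num_ne_zero hs0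
    have hA0 : A ≠ 0 := by
      rintro rfl
      rw [map_zero, zero_div] at hs
      exact hs0 hs
    have h1 : s.num.natDegree + B.natDegree = s.denom.natDegree + A.natDegree := by
      have := congrArg natDegree key
      rwa [natDegree_mul hn0 hB0, natDegree_mul s.denom_ne_zero hA0] at this
    have h2 : A.natDegree < B.natDegree := natDegree_lt_natDegree hA0 hdeg
    exact degree_lt_degree (by omega)

theorem deriv_formula {D : RatFunc K → RatFunc K} (hD : IsDeriv D)
    (hval : ∀ A : K[X], D (algebraMap K[X] (RatFunc K) A)
        = algebraMap K[X] (RatFunc K) (derivative A)) (h : RatFunc K) :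
    D h * algebraMap K[X] (RatFunc K) (h.denom ^ 2) =
      algebraMap K[X] (RatFunc K)
        (derivative h.num * h.denom - h.num * derivative h.denom) := by
  have hd' : algebraMap K[X] (RatFunc K) h.denom ≠ 0 :=
    RatFunc.algebraMap_ne_zero h.denom_ne_zero
  have e1 : h * algebraMap K[X] (RatFunc K) h.denom = algebraMap K[X] (RatFunc K) h.num :=
    ((div_eq_iff hd').mp (RatFunc.num_div_denom h)).symm
  have e2 := hD.2 h (algebraMap K[X] (RatFunc K) h.denom)
  rw [e1, hval, hval] at e2
  rw [map_sub, map_mul, map_mul, map_pow]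
  linear_combination (-(algebraMap K[X] (RatFunc K) h.denom)) * e2 -
    (algebraMap K[X] (RatFunc K) (derivative h.denom)) * e1

theorem exists_pow_mul_not_dvd_aux {p : K[X]} (hp : 0 < p.natDegree) :
    ∀ n : ℕ, ∀ d : K[X], d.natDegree ≤ n → d ≠ 0 → ∃ m e, d = p ^ m * e ∧ ¬ p ∣ e := by
  have hp0 : p ≠ 0 := fun h => by simp [h] at hp
  intro n
  induction n using Nat.strong_induction_on with
  | _ n ih =>
    intro d hdn hd
    by_cases hpd : p ∣ d
    · obtain ⟨c, rfl⟩ := hpd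
      have hc : c ≠ 0 := right_ne_zero_of_mul hd
      have hlt : c.natDegree < n := by
        have := natDegree_mul hp0 hc
        omega
      obtain ⟨m, e, h1, h2⟩ := ih c.natDegree hlt c le_rfl hc
      exact ⟨m + 1, e, by rw [pow_succ, h1]; ring, h2⟩
    · exact ⟨0, d, by rw [pow_zero, one_mul], hpd⟩

theorem exists_pow_mul_not_dvd {p : K[X]} (hp : 0 < p.natDegree) (d : K[X]) (hd : d ≠ 0) :
    ∃ m e, d = p ^ m * e ∧ ¬ p ∣ e :=
  exists_pow_mul_not_dvd_aux hp d.natDegree d le_rfl hd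

theorem key_lemma [CharZero K] {D : RatFunc K → RatFunc K} (hD : IsDeriv D)
    (hval : ∀ A : K[X], D (algebraMap K[X] (RatFunc K) A)
        = algebraMap K[X] (RatFunc K) (derivative A))
    {h : RatFunc K} (hgood : GoodRep (D h)) : D h = 0 := by
  obtain ⟨hsq, hprop⟩ := hgood.denom_squarefree_proper
  set s := D h with hs
  set n := h.num with hn
  set d := h.denom with hd
  have hd0 : d ≠ 0 := h.denom_ne_zero
  have hder := deriv_formula hD hval h
  have hrep : s = algebraMap K[X] (RatFunc K) (derivative n * d - n * derivative d) /
      algebraMap K[X] (RatFunc K) (d ^ 2) := by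
    rw [eq_div_iff (RatFunc.algebraMap_ne_zero (pow_ne_zero 2 hd0))]
    exact hder
  have E := num_mul_eq (pow_ne_zero 2 hd0) hrep
  -- show the denominator of h is constant
  have hdc : d.natDegree = 0 := by
    by_contra hdc
    have hdpos : 0 < d.natDegree := Nat.pos_of_ne_zero hdc
    have hdu : ¬ IsUnit d := fun hu => hdc (natDegree_eq_zero_of_isUnit hu)
    obtain ⟨p, hpirr, hpd⟩ := WfDvdMonoid.exists_irreducible_factor hdu hd0
    have hp : Prime p := UniqueFactorizationMonoid.irreducible_iff_prime.mp hpirr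
    have hppos : 0 < p.natDegree := by
      by_contra hc
      push_neg at hc
      have hpc := eq_C_of_natDegree_eq_zero (Nat.le_zero.mp hc)
      exact hpirr.not_isUnit (hpc ▸ isUnit_C.mpr (IsUnit.mk0 _
        (fun hc0 => hp.ne_zero (by rw [hpc, hc0, map_zero]))))
    obtain ⟨m, e, hde, hpe⟩ := exists_pow_mul_not_dvd hppos d hd0
    obtain ⟨m', rfl⟩ : ∃ m', m = m' + 1 := by
      cases m with
      | zero =>
          rw [pow_zero, one_mul] at hde
          exact absurd (hde ▸ hpd) hpe
      | succ m' => exact ⟨m', rfl⟩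
    set W : K[X] := p * (derivative n * e - n * derivative e)
        - ((m' + 1 : ℕ) : K[X]) * n * derivative p * e with hW
    have hder_d : derivative d = ((m' + 1 : ℕ) : K[X]) * p ^ m' * derivative p * e
        + p ^ (m' + 1) * derivative e := by
      rw [hde, derivative_mul, derivative_pow]
      simp only [Nat.add_sub_cancel, C_eq_natCast]
    have hfact : derivative n * d - n * derivative d = p ^ m' * W := by
      rw [hder_d, hde, hW]
      ring
    rw [hfact, hde] at E
    have E2 : p ^ (m' + 2) * (s.num * e ^ 2) = s.denom * W := by
      apply mul_left_cancel₀ (pow_ne_zero m' hp.ne_zero)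
      linear_combination E
    have hpW : ¬ p ∣ W := by
      intro hpW
      have h1 : p ∣ ((m' + 1 : ℕ) : K[X]) * n * derivative p * e := by
        have : ((m' + 1 : ℕ) : K[X]) * n * derivative p * e
            = p * (derivative n * e - n * derivative e) - W := by rw [hW]; ring
        rw [this]
        exact dvd_sub (dvd_mul_right p _) hpW
      have hderp0 : derivative p ≠ 0 := by
        intro hc
        exact hdc (by
          exact absurd (natDegree_eq_zero_of_derivative_eq_zero hc) (by omega))
      rcases hp.dvd_or_dvd h1 with h2 | h2
      · rcases hp.dvd_or_dvd h2 with h3 | h3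
        · rcases hp.dvd_or_dvd h3 with h4 | h4
          · exact hpirr.not_isUnit (isUnit_of_dvd_unit h4
              (isUnit_C.mpr (IsUnit.mk0 _ (Nat.cast_ne_zero.mpr (Nat.succ_ne_zero m')))) )
          · exact hpirr.not_isUnit
              ((RatFunc.isCoprime_num_denom h).isUnit_of_dvd' h4 hpd)
        · have := degree_le_of_dvd h3 hderp0
          exact absurd this (not_le.mpr (degree_derivative_lt hp.ne_zero))
      · exact hpe h2
    have hfin : p ^ (m' + 2) ∣ s.denom :=
      hp.pow_dvd_of_dvd_mul_right (m' + 2) hpW ⟨s.num * e ^ 2, E2.symm⟩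
    have hpp : p * p ∣ s.denom := by
      have : p ^ 2 ∣ p ^ (m' + 2) := pow_dvd_pow p (by omega)
      rw [← sq]
      exact this.trans hfin
    exact hpirr.not_isUnit (hsq p hpp)
  -- now h is a polynomial
  have hd1 : d = 1 := (Polynomial.Monic.natDegree_eq_zero (RatFunc.monic_denom h)).mp hdc
  have hpoly : h = algebraMap K[X] (RatFunc K) n := by
    rw [← RatFunc.num_div_denom h, ← hn, ← hd, hd1, map_one, div_one]
  have hs' : s = algebraMap K[X] (RatFunc K) (derivative n) := by
    rw [hs, hpoly, hval]
  have hsd : s.denom = 1 := by rw [hs']; exact RatFunc.denom_algebraMap _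
  rw [hsd, degree_one] at hprop
  have : s.num = 0 := by
    by_contra hc
    rw [degree_eq_natDegree hc] at hprop
    exact absurd hprop (by simp [← Nat.cast_withBot])
  exact RatFunc.num_eq_zero_iff.mp this

end Key

end Stmt8Aux


/-- Lemma `le:minimaltele`. Under Hypothesis (H), with `f = P/Q` and, for
each `i`, the (unique) decomposition `D_x^i(f) = D_y(gᵢ) + rᵢ` with `gᵢ, rᵢ` proper (in `y`
over `k(x)`) and the denominator of `rᵢ` squarefree:
(1) for `η₀, …, η_ρ ∈ k(x)` with `η_ρ ≠ 0`, the operator `L = ∑ ηᵢ·D_x^i` is a telescoper of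
order `ρ` for `f` with certificate `∑ ηᵢ·gᵢ` iff `∑ ηᵢ·rᵢ = 0`;
(2) for any nontrivial dependence `∑ ηᵢ·rᵢ = 0` with `i ≤ ρ`: `ρ` is smallest such that
`r₀, …, r_ρ` are linearly dependent over `k(x)` iff `∑ ηᵢ·D_x^i` is a minimal telescoper for
`f` with certificate `∑ ηᵢ·gᵢ`. -/
theorem stmt_8 {k : Type*} [Field k] [CharZero k]
    (P Q : Polynomial (Polynomial k))
    (hP : P ≠ 0) (hQ : Q ≠ 0)
    (hPQdeg : P.degree < Q.degree)
    (hPQcop : IsRelPrime P Q)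
    (hQprimY : Q.IsPrimitive)
    (Dy : RatFunc (RatFunc k) → RatFunc (RatFunc k)) (hDy : IsDeriv Dy)
    (hDyval : ∀ A : Polynomial (RatFunc k), Dy (kyToF A) = kyToF (Polynomial.derivative A))
    (Dx : RatFunc (RatFunc k) → RatFunc (RatFunc k)) (hDx : IsDeriv Dx)
    (hDxval : ∀ A : Polynomial (Polynomial k), Dx (toF A) = toF (derivX A))
    (g r : ℕ → RatFunc (RatFunc k))
    (hdec : ∀ i : ℕ, Dx^[i] (toF P / toF Q) = Dy (g i) + r i)
    (hgprop : ∀ i : ℕ, (g i).num.degree < (g i).denom.degree)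
    (hrprop : ∀ i : ℕ, (r i).num.degree < (r i).denom.degree)
    (hrsq : ∀ i : ℕ, Squarefree (r i).denom) :
    (∀ (ρ : ℕ) (η : Fin (ρ + 1) → RatFunc k), η (Fin.last ρ) ≠ 0 →
      ((∑ i : Fin (ρ + 1), ratToF (η i) * Dx^[(i : ℕ)] (toF P / toF Q) =
          Dy (∑ i : Fin (ρ + 1), ratToF (η i) * g (i : ℕ))) ↔
        ∑ i : Fin (ρ + 1), ratToF (η i) * r (i : ℕ) = 0)) ∧
    (∀ (ρ : ℕ) (η : Fin (ρ + 1) → RatFunc k), (∃ i, η i ≠ 0) →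
      (∑ i : Fin (ρ + 1), ratToF (η i) * r (i : ℕ) = 0) →
      ((∀ ρ' < ρ, ¬ ∃ η' : Fin (ρ' + 1) → RatFunc k, (∃ i, η' i ≠ 0) ∧
          ∑ i : Fin (ρ' + 1), ratToF (η' i) * r (i : ℕ) = 0)
        ↔
       (η (Fin.last ρ) ≠ 0 ∧
        (∑ i : Fin (ρ + 1), ratToF (η i) * Dx^[(i : ℕ)] (toF P / toF Q) =
          Dy (∑ i : Fin (ρ + 1), ratToF (η i) * g (i : ℕ))) ∧
        ∀ (ρ' : ℕ) (η' : Fin (ρ' + 1) → RatFunc k), η' (Fin.last ρ') ≠ 0 →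
          (∃ g' : RatFunc (RatFunc k),
            ∑ i : Fin (ρ' + 1), ratToF (η' i) * Dx^[(i : ℕ)] (toF P / toF Q) = Dy g') →
          ρ ≤ ρ'))) := by
  haveI : CharZero (RatFunc k) := by
    have hinj : Function.Injective
        ((algebraMap (Polynomial k) (RatFunc k)).comp (Polynomial.C : k →+* Polynomial k)) :=
      (RatFunc.algebraMap_injective k).comp Polynomial.C_injective
    exact (RingHom.charZero_iff hinj).mp inferInstance
  have hDyC : ∀ c : RatFunc k, Dy (ratToF c) = 0 := by
    intro c
    have h1 : ratToF c = kyToF (Polynomial.C c) := rfl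
    rw [h1, hDyval, Polynomial.derivative_C, map_zero]
  have hkey : ∀ (ρ : ℕ) (η : Fin (ρ + 1) → RatFunc k),
      ∑ i : Fin (ρ + 1), ratToF (η i) * Dx^[(i : ℕ)] (toF P / toF Q)
        = Dy (∑ i : Fin (ρ + 1), ratToF (η i) * g (i : ℕ))
          + ∑ i : Fin (ρ + 1), ratToF (η i) * r (i : ℕ) := by
    intro ρ η
    rw [Stmt8Aux.deriv_sum hDy, ← Finset.sum_add_distrib]
    refine Finset.sum_congr rfl fun i _ => ?_
    rw [hdec (i : ℕ), Stmt8Aux.deriv_const_mul hDy (hDyC (η i))]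
    ring
  have part1 : ∀ (ρ : ℕ) (η : Fin (ρ + 1) → RatFunc k),
      ((∑ i : Fin (ρ + 1), ratToF (η i) * Dx^[(i : ℕ)] (toF P / toF Q) =
          Dy (∑ i : Fin (ρ + 1), ratToF (η i) * g (i : ℕ))) ↔
        ∑ i : Fin (ρ + 1), ratToF (η i) * r (i : ℕ) = 0) := by
    intro ρ η
    rw [hkey ρ η]
    constructor
    · intro hE
      have h2 : Dy (∑ i : Fin (ρ + 1), ratToF (η i) * g (i : ℕ))
          + ∑ i : Fin (ρ + 1), ratToF (η i) * r (i : ℕ)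
          = Dy (∑ i : Fin (ρ + 1), ratToF (η i) * g (i : ℕ)) + 0 := by
        rw [add_zero]; exact hE
      exact add_left_cancel h2
    · intro hT
      rw [hT, add_zero]
  have hgoodT : ∀ (ρ : ℕ) (η : Fin (ρ + 1) → RatFunc k),
      Stmt8Aux.GoodRep (∑ i : Fin (ρ + 1), ratToF (η i) * r (i : ℕ)) := by
    intro ρ η
    apply Stmt8Aux.GoodRep.sum
    intro i _
    have hgi : Stmt8Aux.GoodRep (r (i : ℕ)) :=
      ⟨(r (i : ℕ)).num, (r (i : ℕ)).denom, hrsq (i : ℕ), hrprop (i : ℕ),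
        (RatFunc.num_div_denom _).symm⟩
    exact hgi.const_mul (η i)
  have hzero : ∀ (ρ' : ℕ) (η' : Fin (ρ' + 1) → RatFunc k),
      (∃ g', ∑ i : Fin (ρ' + 1), ratToF (η' i) * Dx^[(i : ℕ)] (toF P / toF Q) = Dy g') →
      ∑ i : Fin (ρ' + 1), ratToF (η' i) * r (i : ℕ) = 0 := by
    rintro ρ' η' ⟨g', hg'⟩
    have h2 : Dy g' = Dy (∑ i : Fin (ρ' + 1), ratToF (η' i) * g (i : ℕ))
        + ∑ i : Fin (ρ' + 1), ratToF (η' i) * r (i : ℕ) := hg'.symm.trans (hkey ρ' η')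
    have h1 : ∑ i : Fin (ρ' + 1), ratToF (η' i) * r (i : ℕ)
        = Dy (g' - ∑ i : Fin (ρ' + 1), ratToF (η' i) * g (i : ℕ)) := by
      rw [Stmt8Aux.deriv_sub hDy, h2]
      ring
    have hgd : Stmt8Aux.GoodRep
        (Dy (g' - ∑ i : Fin (ρ' + 1), ratToF (η' i) * g (i : ℕ))) :=
      h1 ▸ hgoodT ρ' η'
    have := Stmt8Aux.key_lemma hDy hDyval hgd
    rw [h1, this]
  have trunc : ∀ (ρ' : ℕ) (η' : Fin (ρ' + 1) → RatFunc k), (∃ i, η' i ≠ 0) →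
      (∑ i : Fin (ρ' + 1), ratToF (η' i) * r (i : ℕ) = 0) →
      ∃ ρ'', ρ'' ≤ ρ' ∧ ∃ η'' : Fin (ρ'' + 1) → RatFunc k, η'' (Fin.last ρ'') ≠ 0 ∧
        ∑ i : Fin (ρ'' + 1), ratToF (η'' i) * r (i : ℕ) = 0 := by
    intro ρ'
    induction ρ' with
    | zero =>
        intro η' hne hsum
        refine ⟨0, le_rfl, η', ?_, hsum⟩
        obtain ⟨i, hi⟩ := hne
        rwa [show Fin.last 0 = i from Fin.ext (by have := i.isLt; omega)]
    | succ m ih =>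
        intro η' hne hsum
        by_cases hl : η' (Fin.last (m + 1)) = 0
        · rw [Fin.sum_univ_castSucc, hl] at hsum
          simp only [map_zero, zero_mul, add_zero, Fin.coe_castSucc] at hsum
          have hne' : ∃ j : Fin (m + 1), η' j.castSucc ≠ 0 := by
            obtain ⟨i, hi⟩ := hne
            have hil : i ≠ Fin.last (m + 1) := fun hh => hi (by rw [hh, hl])
            exact ⟨i.castPred hil, by rwa [Fin.castSucc_castPred]⟩
          obtain ⟨ρ'', hle, η'', h1, h2⟩ := ih (fun j => η' j.castSucc) hne' hsum
          exact ⟨ρ'', hle.trans (Nat.le_succ m), η'', h1, h2⟩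
        · exact ⟨m + 1, le_rfl, η', hl, hsum⟩
  refine ⟨fun ρ η _ => part1 ρ η, ?_⟩
  intro ρ η hne hdep
  constructor
  · intro hmin
    have hlast : η (Fin.last ρ) ≠ 0 := by
      intro hl
      cases ρ with
      | zero =>
          obtain ⟨i, hi⟩ := hne
          exact hi (by rw [show i = Fin.last 0 from Fin.ext (by have := i.isLt; omega), hl])
      | succ m =>
          have hdep' := hdep
          rw [Fin.sum_univ_castSucc, hl] at hdep'
          simp only [map_zero, zero_mul, add_zero, Fin.coe_castSucc] at hdep'
          have hne' : ∃ j : Fin (m + 1), η j.castSucc ≠ 0 := by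
            obtain ⟨i, hi⟩ := hne
            have hil : i ≠ Fin.last (m + 1) := fun hh => hi (by rw [hh, hl])
            exact ⟨i.castPred hil, by rwa [Fin.castSucc_castPred]⟩
          exact hmin m (Nat.lt_succ_self m) ⟨fun j => η j.castSucc, hne', hdep'⟩
    refine ⟨hlast, (part1 ρ η).mpr hdep, ?_⟩
    intro ρ' η' hlast' hex
    have hz := hzero ρ' η' hex
    by_contra hlt
    push_neg at hlt
    exact hmin ρ' hlt ⟨η', ⟨Fin.last ρ', hlast'⟩, hz⟩
  · rintro ⟨hlast, htel, hminT⟩ ρ' hρ' ⟨η'', hne'', hdep''⟩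
    obtain ⟨ρ''', hle, η''', h1, h2⟩ := trunc ρ' η'' hne'' hdep''
    have htel' := (part1 ρ''' η''').mpr h2
    have := hminT ρ''' η''' h1 ⟨_, htel'⟩
    omega
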